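/- Let H be Hayashi's face algebra with quasitriangular structure R (over ℂ, with parameters N ≥ 2 and a primitive N-th root of unity ω). Then the braided Hopf algebra _RH = C_H(H_s) equals the ℂ-linear span of {X^i_i(p) : i,p ∈ Z_N} (indeed 1₁X^m_n(r)S(1₂) = δ_{m,n}X^m_n(r)), and its structure maps are: multiplication X^i_i(p)X^k_k(q) = δ_{i,k}δ_{p,q}X^i_i(p); unit 1 = Σ_{i,p}X^i_i(p); comultiplication Δ'(X^k_k(s)) = Σ_{w+q=s} X^k_k(w)⊗X^k_k(q); counit ε_t(X^i_i(s)) = δ_{s,0}Σ_p X^i_i(p); antipode S̄(X^k_k(s)) = X^k_k(−s). -/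

import Mathlib

/- Hayashi's face algebra H = span{X^i_j(s) : i,j,s ∈ Z_N}, realized concretely as
the algebra of Z_N-indexed families of N×N matrices over ℂ, so that
X^i_j(p) X^k_l(q) = δ_{jk} δ_{pq} X^i_l(p) and 1 = Σ X^i_i(p). -/

open scoped TensorProduct

noncomputable section

variable (N : ℕ) [NeZero N]

/-- Hayashi's face algebra: its product `X^i_j(p)X^k_l(q) = δ_{j,k}δ_{p,q}X^i_l(p)` is
realized as `Z_N`-families of `N × N` complex matrices (`X^i_j(p)` = the elementary
matrix `E_{ij}` placed in slot `p`). -/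
abbrev FaceAlg := ZMod N → Matrix (ZMod N) (ZMod N) ℂ

/-- The basis element `X^i_j(s)` of the face algebra. -/
def X (i j s : ZMod N) : FaceAlg N := fun p =>
  if p = s then Matrix.single i j 1 else 0

/-- The antipode: `S(X^i_j(p)) = X^{j+p}_{i+p}(-p)`, extended linearly. -/
def SF : FaceAlg N → FaceAlg N := fun f s a b => f (-s) (b + s) (a + s)

/-- `ω^x` for an exponent `x ∈ Z_N`. -/
def wexp (ω : ℂ) (x : ZMod N) : ℂ := ω ^ x.val

/-- The counit: `ε(X^i_j(s)) = δ_{s,0}`, extended linearly. -/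
def epsF (f : FaceAlg N) : ℂ := ∑ i : ZMod N, ∑ j : ZMod N, f 0 i j

/-- The adjoint action of the basis element `X^i_j(s)`:
`X^i_j(s) · y = Σ_{u+v=s} X^i_j(u) y S(X^{i+u}_{j+u}(v))`. -/
def adX (i j s : ZMod N) (y : FaceAlg N) : FaceAlg N :=
  ∑ u : ZMod N, X N i j u * y * SF N (X N (i + u) (j + u) (s - u))

/-- The target map `ε_t(x) = ε(1₁ x) 1₂` (using `Δ(1) = Σ X^a_a(p) ⊗ X^{a+p}_{a+p}(q)`). -/
def etF (x : FaceAlg N) : FaceAlg N :=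
  ∑ a : ZMod N, ∑ p : ZMod N, ∑ q : ZMod N,
    (epsF N (X N a a p * x)) • X N (a + p) (a + p) q

/-- The transmutation comultiplication `Δ̄(x) = x₁ S(R²) ⊗ (R¹ · x₂)` evaluated on the
basis element `X^k_k(s)` of the centralizer, where
`R = Σ_{i,j,p} ω^{-p(i-j)} X^i_j(p) ⊗ X^j_{j+p}(i-j)` and
`Δ(X^k_k(s)) = Σ_{w+q=s} X^k_k(w) ⊗ X^{k+w}_{k+w}(q)`. -/
def comulBarX (ω : ℂ) (k s : ZMod N) : FaceAlg N ⊗[ℂ] FaceAlg N :=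
  ∑ w : ZMod N, ∑ i : ZMod N, ∑ j : ZMod N, ∑ p : ZMod N,
    (wexp N ω (-(p * (i - j)))) •
      ((X N k k w * SF N (X N j (j + p) (i - j))) ⊗ₜ[ℂ]
        adX N i j p (X N (k + w) (k + w) (s - w)))

/-- The transmutation antipode `S̄(x) = R² R'² S(R¹ x S(R'¹))` evaluated on `X^k_k(s)`. -/
def SbarX (ω : ℂ) (x : FaceAlg N) : FaceAlg N :=
  ∑ i : ZMod N, ∑ j : ZMod N, ∑ p : ZMod N,
    ∑ i' : ZMod N, ∑ j' : ZMod N, ∑ p' : ZMod N,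
      (wexp N ω (-(p * (i - j))) * wexp N ω (-(p' * (i' - j')))) •
        (X N j (j + p) (i - j) * X N j' (j' + p') (i' - j') *
          SF N (X N i j p * x * SF N (X N i' j' p')))

/-- The subalgebra `H^i = span{X^i_i(p)}`. -/
def Hi (i : ZMod N) : Submodule ℂ (FaceAlg N) :=
  Submodule.span ℂ {y | ∃ p : ZMod N, y = X N i i p}

lemma X_mul (i j s k l t : ZMod N) :
    X N i j s * X N k l t = if j = k ∧ s = t then X N i l s else 0 := by
  funext p
  simp only [Pi.mul_apply, X]
  by_cases h1 : p = s <;> by_cases h2 : p = t <;> by_cases h3 : j = k <;>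
    simp_all [X, Matrix.single_mul_single_same, Matrix.single_mul_single_of_ne, eq_comm] <;>
    split_ifs <;> simp_all [X, eq_comm]
lemma SF_X (i j p : ZMod N) : SF N (X N i j p) = X N (j + p) (i + p) (-p) := by
  funext s a b
  simp only [SF, X]
  by_cases h : s = -p
  · subst h
    simp [Matrix.single, ← sub_eq_add_neg, eq_sub_iff_add_eq, and_comm]
  · have h2 : ¬(-s = p) := fun hh => h (by rw [← hh, neg_neg])
    simp [h, h2]
lemma stdE (i j a b : ZMod N) :
    (Matrix.single i j (1:ℂ)) a b = if i = a ∧ j = b then 1 else 0 := rfl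
lemma part1 (m n r : ZMod N) :
    (∑ i : ZMod N, ∑ p : ZMod N, ∑ q : ZMod N,
        X N i i p * X N m n r * SF N (X N (i + p) (i + p) q)) =
      if m = n then X N m n r else 0 := by
  simp only [SF_X, X_mul, mul_ite, ite_mul, mul_zero, zero_mul]
  have hq : ∀ i p : ZMod N,
      (∑ q : ZMod N, if i = m ∧ p = r then
        (if n = i + p + q ∧ p = -q then X N i (i + p + q) p else 0) else 0) =
      (if i = m ∧ p = r then (if n = i then X N i i p else 0) else 0) := by
    intro i p
    rw [Fintype.sum_eq_single (-p)]
    · simp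
    · intro b hb
      have : p ≠ -b := fun h => hb (by rw [h, neg_neg])
      simp [this]
  simp only [hq]
  simp [Finset.sum_ite_eq', ite_and, eq_comm]
  split_ifs with h
  · subst h; rfl
  · rfl
lemma EME (M : Matrix (ZMod N) (ZMod N) ℂ) (i a b : ZMod N) :
    ((Matrix.single i i 1 * M * Matrix.single i i 1 :
        Matrix (ZMod N) (ZMod N) ℂ)) a b
      = if a = i ∧ b = i then M i i else 0 := by
  simp [Matrix.mul_apply, Matrix.single, ite_and, eq_comm]
  split_ifs <;> rfl
lemma proj_eq (h : FaceAlg N) :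
    (∑ i : ZMod N, ∑ p : ZMod N, ∑ q : ZMod N,
        X N i i p * h * SF N (X N (i + p) (i + p) q)) =
    (fun s a b => if a = b then h s a b else 0) := by
  funext s a b
  simp only [SF_X, Finset.sum_apply, Matrix.sum_apply, Pi.mul_apply, X]
  have hneg : ∀ c : ZMod N, c ≠ -s → s ≠ -c := by
    intro c hc hh; exact hc (by rw [hh, neg_neg])
  have hsum : ∀ i : ZMod N,
      (∑ p : ZMod N, ∑ q : ZMod N,
        (((if s = p then Matrix.single i i 1 else 0) * h s *
          (if s = -q then Matrix.single (i + p + q) (i + p + q) 1 else 0) :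
            Matrix (ZMod N) (ZMod N) ℂ)) a b)
      = ((Matrix.single i i 1 * h s * Matrix.single i i 1 :
            Matrix (ZMod N) (ZMod N) ℂ) a b) := by
    intro i
    have hz : ∀ p : ZMod N, p ≠ s → (∑ q : ZMod N,
        (((if s = p then Matrix.single i i 1 else 0) * h s *
          (if s = -q then Matrix.single (i + p + q) (i + p + q) 1 else 0) :
            Matrix (ZMod N) (ZMod N) ℂ)) a b) = 0 := by
      intro p hp
      apply Finset.sum_eq_zero
      intro q _
      simp [Ne.symm hp]
    rw [Fintype.sum_eq_single s hz, Fintype.sum_eq_single (-s)]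
    · simp
    · intro c hc
      simp [hneg c hc]
  rw [Finset.sum_congr rfl (fun i _ => hsum i)]
  simp only [EME]
  by_cases hab : a = b
  · subst hab
    simp [Finset.sum_ite_eq', ite_and]
  · rw [if_neg hab, Finset.sum_eq_zero]
    intro i _
    split_ifs with hcond
    · exact absurd (hcond.1.trans hcond.2.symm) hab
    · rfl
lemma one_eq : (1 : FaceAlg N) = ∑ i : ZMod N, ∑ p : ZMod N, X N i i p := by
  funext s a b
  simp only [Finset.sum_apply, Matrix.sum_apply, X]
  rw [Fintype.sum_congr _ _ (fun i => Fintype.sum_eq_single s (fun p hp => by simp [Ne.symm hp]))]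
  simp only [eq_self_iff_true, if_true, Matrix.single, Matrix.one_apply, Pi.one_apply,
    Matrix.of_apply]
  by_cases hab : a = b
  · subst hab
    simp [ite_and, Finset.sum_ite_eq']
  · rw [if_neg hab, Finset.sum_eq_zero]
    intro x _
    rw [if_neg]
    rintro ⟨h1, h2⟩
    exact hab (h1.symm.trans h2)
lemma epsX (i j p : ZMod N) : epsF N (X N i j p) = if p = 0 then 1 else 0 := by
  simp only [epsF, X]
  by_cases h : p = 0
  · subst h
    simp [Matrix.single, ite_and, Finset.sum_ite_eq, Finset.sum_ite_eq']
  · rw [if_neg h]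
    have : (0 : ZMod N) ≠ p := fun hh => h hh.symm
    simp [this]
lemma part6 (i s : ZMod N) :
    etF N (X N i i s) = if s = 0 then ∑ p : ZMod N, X N i i p else 0 := by
  unfold etF
  simp only [X_mul]
  have key : ∀ a p : ZMod N, epsF N (if a = i ∧ p = s then X N a i p else 0) =
      if a = i ∧ p = s then (if s = 0 then 1 else 0) else 0 := by
    intro a p
    by_cases h : a = i ∧ p = s
    · rw [if_pos h, if_pos h, epsX, h.2]
    · rw [if_neg h, if_neg h]
      simp [epsF]
  simp only [key]
  have step : ∀ a p : ZMod N,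
      (∑ q : ZMod N, (if a = i ∧ p = s then (if s = 0 then (1:ℂ) else 0) else 0) • X N (a+p) (a+p) q)
      = if a = i then (if p = s then (if s = 0 then ∑ q : ZMod N, X N (a+p) (a+p) q else 0) else 0) else 0 := by
    intro a p
    split_ifs <;> simp_all [Finset.smul_sum]
  simp only [step]
  rw [Fintype.sum_eq_single i (fun b hb => by simp [hb]),
    Fintype.sum_eq_single s (fun b hb => by simp [hb])]
  rw [if_pos rfl, if_pos rfl]
  split_ifs with h
  · subst h; simp
  · rfl
lemma part2 :
    Submodule.span ℂ {y : FaceAlg N | ∃ h : FaceAlg N,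
        y = ∑ i : ZMod N, ∑ p : ZMod N, ∑ q : ZMod N,
            X N i i p * h * SF N (X N (i + p) (i + p) q)} =
      Submodule.span ℂ {y : FaceAlg N | ∃ i p : ZMod N, y = X N i i p} := by
  apply le_antisymm
  · rw [Submodule.span_le]
    rintro y ⟨h, rfl⟩
    rw [proj_eq]
    have hrep : (fun s a b => if a = b then h s a b else 0) =
        ∑ i : ZMod N, ∑ p : ZMod N, h p i i • X N i i p := by
      funext s a b
      simp only [Finset.sum_apply, Matrix.sum_apply, Pi.smul_apply, Matrix.smul_apply, X]
      rw [Fintype.sum_congr _ _ (fun i => Fintype.sum_eq_single s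
        (fun p hp => by simp [Ne.symm hp]))]
      simp only [eq_self_iff_true, if_true, stdE, smul_eq_mul, mul_ite, mul_one, mul_zero]
      by_cases hab : a = b
      · subst hab
        rw [if_pos rfl, Fintype.sum_eq_single a (fun c hc => by simp [hc])]
        simp
      · rw [if_neg hab, Finset.sum_eq_zero]
        intro x _
        rw [if_neg]
        rintro ⟨h1, h2⟩
        exact hab (h1.symm.trans h2)
    rw [hrep]
    exact Submodule.sum_mem _ fun i _ => Submodule.sum_mem _ fun p _ =>
      Submodule.smul_mem _ _ (Submodule.subset_span ⟨i, p, rfl⟩)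
  · rw [Submodule.span_le]
    rintro y ⟨i, p, rfl⟩
    apply Submodule.subset_span
    refine ⟨X N i i p, ?_⟩
    rw [proj_eq]
    funext s a b
    simp only [X]
    by_cases hab : a = b
    · simp [hab]
    · rw [if_neg hab]
      split_ifs with h1
      · rw [stdE, if_neg]
        rintro ⟨h1', h2'⟩
        exact hab (h1'.symm.trans h2')
      · rfl
lemma adX_eval (i j p c t : ZMod N) :
    adX N i j p (X N c c t) = if p = 0 ∧ j = c then X N i i t else 0 := by
  unfold adX
  simp only [SF_X, X_mul, mul_ite, ite_mul, mul_zero, zero_mul]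
  rw [Fintype.sum_eq_single t (fun b hb => by simp [hb])]
  by_cases h : p = 0
  · subst h
    simp [sub_eq_iff_eq_add]
    split_ifs <;> simp_all
  · have h1 : ¬(t = -(p - t)) := by
      rw [neg_sub]
      intro hh
      exact h (by linear_combination hh)
    simp [h1, h]
    intro _ _ hh
    exact absurd (show p = 0 by linear_combination hh) h
lemma wexp_zero (ω : ℂ) : wexp N ω 0 = 1 := by simp [wexp]
lemma wexp_mul_neg {ω : ℂ} (hω : IsPrimitiveRoot ω N) (a : ZMod N) :
    wexp N ω a * wexp N ω (-a) = 1 := by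
  by_cases ha : a = 0
  · subst ha; simp [wexp]
  · rw [wexp, wexp, ← pow_add]
    have hval : a.val + (-a).val = N := by
      rw [ZMod.neg_val, if_neg ha]
      have h1 : a.val < N := ZMod.val_lt a
      have h2 : 0 < a.val := by
        rcases Nat.eq_zero_or_pos a.val with h | h
        · exact absurd ((ZMod.val_eq_zero a).mp h) ha
        · exact h
      omega
    rw [hval, hω.pow_eq_one]
lemma part5 (ω : ℂ) (k s : ZMod N) :
    comulBarX N ω k s = ∑ w : ZMod N, (X N k k w) ⊗ₜ[ℂ] (X N k k (s - w)) := by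
  unfold comulBarX
  simp only [SF_X, adX_eval, X_mul, TensorProduct.ite_tmul, TensorProduct.tmul_ite,
    smul_ite, smul_zero]
  refine Finset.sum_congr rfl (fun w _ => ?_)
  rw [Fintype.sum_eq_single k (fun b hb => Finset.sum_eq_zero fun j _ =>
    Finset.sum_eq_zero fun p _ => by
      split_ifs with h1 h2
      · exact absurd (show b = k by linear_combination -h2.1 - h1.1) hb
      · rfl
      · rfl)]
  rw [Fintype.sum_eq_single (k + w) (fun b hb => Finset.sum_eq_zero fun p _ => by
      split_ifs with h1 h2
      · exact absurd h1.2 hb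
      · rfl
      · rfl)]
  rw [Fintype.sum_eq_single 0 (fun b hb => by
      split_ifs with h1 h2
      · exact absurd h1.1 hb
      · rfl
      · rfl)]
  rw [if_pos (show (0:ZMod N) = 0 ∧ k + w = k + w from ⟨rfl, rfl⟩), if_pos ⟨by ring, by ring⟩]
  have e3 : k + w + (k - (k + w)) = k := by ring
  have e4 : -((0:ZMod N) * (k - (k + w))) = 0 := by ring
  rw [e3, e4, wexp_zero, one_smul]
lemma SF_ite (c : Prop) [Decidable c] (f : FaceAlg N) :
    SF N (if c then f else 0) = if c then SF N f else 0 := by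
  split_ifs <;> rfl
lemma part7 {ω : ℂ} (hω : IsPrimitiveRoot ω N) (k s : ZMod N) :
    SbarX N ω (X N k k s) = X N k k (-s) := by
  unfold SbarX
  simp only [SF_X, X_mul, mul_ite, ite_mul, mul_zero, zero_mul, SF_ite, smul_ite, smul_zero]
  rw [Fintype.sum_eq_single (k - s) (fun b hb => Finset.sum_eq_zero fun j _ =>
    Finset.sum_eq_zero fun p _ => Finset.sum_eq_zero fun i' _ =>
    Finset.sum_eq_zero fun j' _ => Finset.sum_eq_zero fun p' _ => by
      split_ifs with h1 h2 h3 h4 <;> try rfl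
      exact absurd (show b = k - s by linear_combination h4.2 + h1.1 - h1.2) hb)]
  rw [Fintype.sum_eq_single k (fun b hb =>
    Finset.sum_eq_zero fun p _ => Finset.sum_eq_zero fun i' _ =>
    Finset.sum_eq_zero fun j' _ => Finset.sum_eq_zero fun p' _ => by
      split_ifs with h1 h2 h3 h4 <;> try rfl
      exact absurd h1.1 hb)]
  rw [Fintype.sum_eq_single s (fun b hb => Finset.sum_eq_zero fun i' _ =>
    Finset.sum_eq_zero fun j' _ => Finset.sum_eq_zero fun p' _ => by
      split_ifs with h1 h2 h3 h4 <;> try rfl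
      exact absurd h1.2 hb)]
  rw [Fintype.sum_eq_single k (fun b hb =>
    Finset.sum_eq_zero fun j' _ => Finset.sum_eq_zero fun p' _ => by
      split_ifs with h1 h2 h3 h4 <;> try rfl
      exact absurd (show b = k by linear_combination -h3.2 - h3.1) hb)]
  rw [Fintype.sum_eq_single (k + s) (fun b hb => Finset.sum_eq_zero fun p' _ => by
      split_ifs with h1 h2 h3 h4 <;> try rfl
      exact absurd (show b = k + s by linear_combination -h3.1) hb)]
  rw [Fintype.sum_eq_single (-s) (fun b hb => by
      split_ifs with h1 h2 h3 h4 <;> try rfl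
      exact absurd (show b = -s by linear_combination h2.2) hb)]
  rw [if_pos ⟨rfl, rfl⟩, if_pos ⟨by ring, by ring⟩, if_pos ⟨rfl, by ring⟩,
    if_pos ⟨by ring, by ring⟩]
  rw [show -(s * (k - s - k)) = s * s by ring, show -(-s * (k - (k + s))) = -(s * s) by ring,
    wexp_mul_neg N hω, one_smul, show k - s + s = k by ring, show k - s - k = -s by ring]

/- STATEMENT 15 (Lemma 4.1): for Hayashi's face algebra (H,R), the braided Hopf
algebra _RH = C_H(H_s) equals the span of {X^i_i(p)} (indeed
1₁ X^m_n(r) S(1₂) = δ_{m,n} X^m_n(r)), with multiplication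
X^i_i(p)X^k_k(q) = δ_{ik}δ_{pq}X^i_i(p), unit 1 = Σ X^i_i(p), comultiplication
Δ'(X^k_k(s)) = Σ_{w+q=s} X^k_k(w) ⊗ X^k_k(q), counit ε_t(X^i_i(s)) = δ_{s,0}Σ_p X^i_i(p)
and antipode S̄(X^k_k(s)) = X^k_k(-s). -/

theorem face_algebra_transmutation
    (N : ℕ) (hN : 2 ≤ N) [NeZero N] (ω : ℂ) (hω : IsPrimitiveRoot ω N) :
    -- 1₁ X^m_n(r) S(1₂) = δ_{m,n} X^m_n(r), so C_H(H_s) is spanned by the X^i_i(p)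
    (∀ m n r : ZMod N,
      (∑ i : ZMod N, ∑ p : ZMod N, ∑ q : ZMod N,
          X N i i p * X N m n r * SF N (X N (i + p) (i + p) q)) =
        if m = n then X N m n r else 0)
    ∧ (Submodule.span ℂ {y : FaceAlg N | ∃ h : FaceAlg N,
          y = ∑ i : ZMod N, ∑ p : ZMod N, ∑ q : ZMod N,
              X N i i p * h * SF N (X N (i + p) (i + p) q)} =
        Submodule.span ℂ {y : FaceAlg N | ∃ i p : ZMod N, y = X N i i p})
    -- multiplication and unit
    ∧ (∀ i k p q : ZMod N,
        X N i i p * X N k k q = if i = k ∧ p = q then X N i i p else 0)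
    ∧ ((1 : FaceAlg N) = ∑ i : ZMod N, ∑ p : ZMod N, X N i i p)
    -- the transmutation comultiplication Δ'(X^k_k(s)) = Σ_{w+q=s} X^k_k(w) ⊗ X^k_k(q)
    ∧ (∀ k s : ZMod N,
        comulBarX N ω k s = ∑ w : ZMod N, (X N k k w) ⊗ₜ[ℂ] (X N k k (s - w)))
    -- the counit ε_t(X^i_i(s)) = δ_{s,0} Σ_p X^i_i(p)
    ∧ (∀ i s : ZMod N,
        etF N (X N i i s) = if s = 0 then ∑ p : ZMod N, X N i i p else 0)
    -- the antipode S̄(X^k_k(s)) = X^k_k(-s)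
    ∧ (∀ k s : ZMod N, SbarX N ω (X N k k s) = X N k k (-s)) := by
  refine ⟨part1 N, part2 N, fun i k p q => ?_, one_eq N, part5 N ω, part6 N,
    fun k s => part7 N hω k s⟩
  rw [X_mul]
  split_ifs with h
  · rw [h.1]
  · rfl
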